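/- Let C be an additive symmetric monoidal category with tensor additive in each variable, and let X_1,...,X_n be invertible objects with chosen inverses. Suppose a system of isomorphisms φ_{a,b} : X^a ⊗ X^b → X^{a+b} (for a,b ∈ Z^n) is given, satisfying the pentagon compatibility φ_{a+b,c} ∘ (φ_{a,b} ⊗ id) ∘ associator⁻¹ = φ_{a,b+c} ∘ (id ⊗ φ_{b,c}), with φ_{a,0} and φ_{0,b} the unitors. Then the Z^n-graded abelian group π_*(S) with π_a(S) = C(X^a, S) and product f·g = (f ⊗ g) ∘ φ_{a,b}⁻¹ (composed with S ⊗ S ≅ S) is an associative unital ring, and π_0(S) is central. -/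

import Mathlib

open CategoryTheory MonoidalCategory

variable {C : Type*} [Category C] [MonoidalCategory C] [SymmetricCategory C]
  [Preadditive C] [MonoidalPreadditive C]

/-- The graded product on `π_*(S)`: for `f : X^a ⟶ S` and `g : X^b ⟶ S`, the composite
`X^{a+b} ≅ X^a ⊗ X^b ⟶ S ⊗ S ≅ S`. -/
def gmul {n : ℕ} (Xpow : (Fin n → ℤ) → C)
    (φ : ∀ a b : Fin n → ℤ, Xpow a ⊗ Xpow b ≅ Xpow (a + b)) {a b : Fin n → ℤ}
    (f : Xpow a ⟶ 𝟙_ C) (g : Xpow b ⟶ 𝟙_ C) : Xpow (a + b) ⟶ 𝟙_ C :=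
  (φ a b).inv ≫ (f ⊗ₘ g) ≫ (λ_ (𝟙_ C)).hom

private lemma comp_tensor_hom {A B D E F : C} (x : A ⟶ B) (y : B ⟶ D) (h : E ⟶ F) :
    (x ≫ y) ⊗ₘ h = (x ▷ E) ≫ (y ⊗ₘ h) := by
  rw [← tensorHom_id, tensorHom_comp_tensorHom, Category.id_comp]

private lemma comp_tensor_hom' {A B D E F : C} (x : A ⟶ B) (y : B ⟶ D) (h : E ⟶ F) :
    (x ≫ y) ⊗ₘ h = (x ⊗ₘ h) ≫ (y ▷ F) := by
  rw [← tensorHom_id, tensorHom_comp_tensorHom, Category.comp_id]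

private lemma tensor_hom_comp {A B D E F : C} (h : E ⟶ F) (x : A ⟶ B) (y : B ⟶ D) :
    h ⊗ₘ (x ≫ y) = (E ◁ x) ≫ (h ⊗ₘ y) := by
  rw [← id_tensorHom, tensorHom_comp_tensorHom, Category.id_comp]

private lemma tensor_hom_comp' {A B D E F : C} (h : E ⟶ F) (x : A ⟶ B) (y : B ⟶ D) :
    h ⊗ₘ (x ≫ y) = (h ⊗ₘ x) ≫ (F ◁ y) := by
  rw [← id_tensorHom, tensorHom_comp_tensorHom, Category.comp_id]

/-- Let `C` be an additive symmetric monoidal category with biadditive tensor, let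
`X^a` (`a ∈ ℤⁿ`) be tensor powers of invertible objects, and let `φ_{a,b} : X^a ⊗ X^b ≅ X^{a+b}`
be a system of isomorphisms satisfying the pentagon compatibility, with `φ_{a,0}`, `φ_{0,b}`
the unitors (via `ι : S ≅ X^0`).  Then the `ℤⁿ`-graded group `π_a(S) = C(X^a, S)` with the
product `f·g = (f ⊗ g) ∘ φ_{a,b}⁻¹` is an associative, unital, distributive ring whose
degree-`0` part is central. -/
theorem graded_homotopy_ring {n : ℕ} (Xpow : (Fin n → ℤ) → C)
    (hinv : ∀ a, ∃ V : C, Nonempty (𝟙_ C ≅ V ⊗ Xpow a))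
    (ι : 𝟙_ C ≅ Xpow 0)
    (φ : ∀ a b : Fin n → ℤ, Xpow a ⊗ Xpow b ≅ Xpow (a + b))
    (hunitR : ∀ a, (Xpow a ◁ ι.hom) ≫ (φ a 0).hom =
      (ρ_ (Xpow a)).hom ≫ eqToHom (congrArg Xpow (add_zero a).symm))
    (hunitL : ∀ b, (ι.hom ▷ Xpow b) ≫ (φ 0 b).hom =
      (λ_ (Xpow b)).hom ≫ eqToHom (congrArg Xpow (zero_add b).symm))
    (hpent : ∀ a b c, ((φ a b).hom ▷ Xpow c) ≫ (φ (a + b) c).hom ≫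
        eqToHom (congrArg Xpow (add_assoc a b c)) =
      (α_ (Xpow a) (Xpow b) (Xpow c)).hom ≫ (Xpow a ◁ (φ b c).hom) ≫ (φ a (b + c)).hom) :
    -- associativity
    (∀ (a b c : Fin n → ℤ) (f : Xpow a ⟶ 𝟙_ C) (g : Xpow b ⟶ 𝟙_ C) (h : Xpow c ⟶ 𝟙_ C),
      gmul Xpow φ (gmul Xpow φ f g) h =
        eqToHom (congrArg Xpow (add_assoc a b c)) ≫ gmul Xpow φ f (gmul Xpow φ g h)) ∧
    -- unitality (the unit is `ι.inv ∈ π_0(S)`)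
    (∀ (a : Fin n → ℤ) (f : Xpow a ⟶ 𝟙_ C),
      gmul Xpow φ f ι.inv = eqToHom (congrArg Xpow (add_zero a)) ≫ f) ∧
    (∀ (a : Fin n → ℤ) (f : Xpow a ⟶ 𝟙_ C),
      gmul Xpow φ ι.inv f = eqToHom (congrArg Xpow (zero_add a)) ≫ f) ∧
    -- distributivity
    (∀ (a b : Fin n → ℤ) (f f' : Xpow a ⟶ 𝟙_ C) (g : Xpow b ⟶ 𝟙_ C),
      gmul Xpow φ (f + f') g = gmul Xpow φ f g + gmul Xpow φ f' g) ∧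
    (∀ (a b : Fin n → ℤ) (f : Xpow a ⟶ 𝟙_ C) (g g' : Xpow b ⟶ 𝟙_ C),
      gmul Xpow φ f (g + g') = gmul Xpow φ f g + gmul Xpow φ f g') ∧
    -- centrality of `π_0(S)`
    (∀ (a : Fin n → ℤ) (u : Xpow 0 ⟶ 𝟙_ C) (f : Xpow a ⟶ 𝟙_ C),
      gmul Xpow φ u f =
        eqToHom (congrArg Xpow ((zero_add a).trans (add_zero a).symm)) ≫ gmul Xpow φ f u) := by
  refine ⟨?_, ?_, ?_, ?_, ?_, ?_⟩
  · -- associativity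
    intro a b c f g h
    have hpentinv : (φ (a + b) c).inv ≫ ((φ a b).inv ▷ Xpow c) ≫
        (α_ (Xpow a) (Xpow b) (Xpow c)).hom =
        eqToHom (congrArg Xpow (add_assoc a b c)) ≫ (φ a (b + c)).inv ≫
          (Xpow a ◁ (φ b c).inv) := by
      rw [← cancel_mono (Xpow a ◁ (φ b c).hom), ← cancel_mono (φ a (b + c)).hom]
      simp only [Category.assoc, ← hpent a b c]
      simp [← comp_whiskerRight_assoc]
    simp only [gmul]
    rw [comp_tensor_hom, comp_tensor_hom']
    have hnat : (f ⊗ₘ g) ⊗ₘ h =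
        (α_ (Xpow a) (Xpow b) (Xpow c)).hom ≫ (f ⊗ₘ (g ⊗ₘ h)) ≫
          (α_ (𝟙_ C) (𝟙_ C) (𝟙_ C)).inv := by
      rw [← associator_naturality_assoc]; simp
    have htri : (α_ (𝟙_ C) (𝟙_ C) (𝟙_ C)).inv ≫ ((λ_ (𝟙_ C)).hom ▷ 𝟙_ C) =
        𝟙_ C ◁ (λ_ (𝟙_ C)).hom := by
      rw [Iso.inv_comp_eq, triangle, unitors_equal]
    rw [hnat]
    simp only [Category.assoc]
    rw [reassoc_of% htri]
    rw [reassoc_of% hpentinv]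
    rw [tensor_hom_comp f ((φ b c).inv) ((g ⊗ₘ h) ≫ (λ_ (𝟙_ C)).hom),
      tensor_hom_comp' f (g ⊗ₘ h) ((λ_ (𝟙_ C)).hom)]
    simp only [Category.assoc]
  · -- right unit
    intro a f
    simp only [gmul]
    have h2 : (φ a 0).hom = (Xpow a ◁ ι.inv) ≫ (ρ_ (Xpow a)).hom ≫
        eqToHom (congrArg Xpow (add_zero a).symm) := by
      rw [← hunitR a, ← MonoidalCategory.whiskerLeft_comp_assoc, Iso.inv_hom_id,
        MonoidalCategory.whiskerLeft_id, Category.id_comp]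
    rw [← cancel_epi (φ a 0).hom, Iso.hom_inv_id_assoc]
    conv_rhs => rw [h2]
    simp only [Category.assoc, eqToHom_trans, eqToHom_trans_assoc, eqToHom_refl,
      Category.comp_id, Category.id_comp]
    rw [tensorHom_def' f ι.inv, unitors_equal]
    simp only [Category.assoc, rightUnitor_naturality]
  · -- left unit
    intro a f
    simp only [gmul]
    have h2 : (φ 0 a).hom = (ι.inv ▷ Xpow a) ≫ (λ_ (Xpow a)).hom ≫
        eqToHom (congrArg Xpow (zero_add a).symm) := by
      rw [← hunitL a, ← comp_whiskerRight_assoc, Iso.inv_hom_id, id_whiskerRight,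
        Category.id_comp]
    rw [← cancel_epi (φ 0 a).hom, Iso.hom_inv_id_assoc]
    conv_rhs => rw [h2]
    simp only [Category.assoc, eqToHom_trans, eqToHom_trans_assoc, eqToHom_refl,
      Category.comp_id, Category.id_comp]
    rw [tensorHom_def ι.inv f]
    simp only [Category.assoc, leftUnitor_naturality]
  · intro a b f f' g
    simp [gmul, MonoidalPreadditive.add_tensor]
  · intro a b f g g'
    simp [gmul, MonoidalPreadditive.tensor_add]
  · -- centrality
    intro a u f
    have hb : (β_ (Xpow 0) (Xpow a)).hom =
        (φ 0 a).hom ≫ eqToHom (congrArg Xpow ((zero_add a).trans (add_zero a).symm)) ≫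
          (φ a 0).inv := by
      rw [← cancel_epi (ι.hom ▷ Xpow a), ← cancel_mono (φ a 0).hom]
      simp only [Category.assoc, Iso.inv_hom_id, Category.comp_id]
      rw [BraidedCategory.braiding_naturality_left_assoc, braiding_tensorUnit_left,
        Category.assoc, hunitR a, Iso.inv_hom_id_assoc]
      rw [reassoc_of% hunitL a]
      simp [eqToHom_trans]
    have hswap : (u ⊗ₘ f) ≫ (λ_ (𝟙_ C)).hom =
        (β_ (Xpow 0) (Xpow a)).hom ≫ (f ⊗ₘ u) ≫ (λ_ (𝟙_ C)).hom := by
      have hβ1 : (β_ (𝟙_ C) (𝟙_ C)).hom = 𝟙 _ := by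
        rw [braiding_tensorUnit_left, unitors_equal]; simp
      rw [← BraidedCategory.braiding_naturality_assoc, hβ1, Category.id_comp]
    simp only [gmul]
    rw [hswap, reassoc_of% hb, Iso.inv_hom_id_assoc]
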